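/- Let T be a string of length n and let 1 ≤ j ≤ n. If the longest repeating suffix of T[1..j] is empty (i.e., every nonempty suffix of T[1..j] occurs only once in T[1..j]), then exactly one new distinct closed factor appears when extending T[1..j-1] to T[1..j]; that is, |C(T[1..j])| - |C(T[1..j-1])| = 1. -/

import Mathlib

variable {α : Type*} [DecidableEq α]

/-- Number of occurrences of `s` as a factor of `w` (starting positions, 0-indexed). -/
def countOcc (s w : List α) : ℕ :=
  ((Finset.range (w.length + 1)).filter (fun i => s <+: w.drop i)).card

/-- `b` is a border of `w`. -/
def IsBorder (b w : List α) : Prop := b ≠ w ∧ b <+: w ∧ b <:+ w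

/-- The longest border of `w`. -/
def bord (w : List α) : List α :=
  w.take (((Finset.range w.length).filter (fun k => w.take k <:+ w)).sup id)

/-- A string is closed if its length is one, or it has a nonempty border occurring
exactly twice in it. -/
def IsClosedStr (w : List α) : Prop :=
  w.length = 1 ∨ ∃ b : List α, b ≠ [] ∧ IsBorder b w ∧ countOcc b w = 2

/-- The longest repeating suffix of `w` (the empty string if none). -/
def lrs (w : List α) : List α :=
  w.drop (w.length -
    ((Finset.range (w.length + 1)).filter
      (fun k => 2 ≤ countOcc (w.drop (w.length - k)) w)).sup id)

/-- `u` is a factor (contiguous substring) of `w`. -/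
def IsFactor (u w : List α) : Prop := ∃ s t : List α, w = s ++ u ++ t

/-- The set of all factors of `w`. -/
def factors (w : List α) : Finset (List α) :=
  (Finset.range (w.length + 1) ×ˢ Finset.range (w.length + 1)).image
    (fun p => (w.drop p.1).take p.2)

/-- The set of distinct closed factors of `w`. -/
noncomputable def closedFactors (w : List α) : Finset (List α) :=
  @Finset.filter _ IsClosedStr (Classical.decPred _) (factors w)

set_option linter.unusedSectionVars false

lemma mem_factors_iff {u w : List α} : u ∈ factors w ↔ IsFactor u w := by
  constructor
  · intro h
    simp only [factors, Finset.mem_image, Finset.mem_product, Finset.mem_range] at h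
    obtain ⟨⟨i, k⟩, ⟨hi, hk⟩, rfl⟩ := h
    exact ⟨w.take i, (w.drop i).drop k, by
      rw [List.append_assoc, List.take_append_drop, List.take_append_drop]⟩
  · rintro ⟨s, t, rfl⟩
    simp only [factors, Finset.mem_image, Finset.mem_product, Finset.mem_range]
    refine ⟨⟨s.length, u.length⟩, ⟨?_, ?_⟩, ?_⟩
    · simp
    · simp; omega
    · simp [List.drop_left, List.take_left]

lemma drop_of_suffix {s w : List α} (h : s <:+ w) : w.drop (w.length - s.length) = s :=
  (List.suffix_iff_eq_drop.mp h).symm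

lemma countOcc_pos_of_suffix {s w : List α} (h : s <:+ w) : 1 ≤ countOcc s w := by
  rw [countOcc]
  exact Finset.card_pos.mpr ⟨w.length - s.length, Finset.mem_filter.mpr
    ⟨Finset.mem_range.mpr (by omega), by rw [drop_of_suffix h]⟩⟩

lemma countOcc_le_of_suffix (b : List α) {u w : List α} (h : u <:+ w) :
    countOcc b u ≤ countOcc b w := by
  obtain ⟨s, rfl⟩ := h
  apply Finset.card_le_card_of_injOn (fun i => s.length + i)
  · intro i hi
    simp only [Finset.mem_coe, Finset.mem_filter, Finset.mem_range] at *
    refine ⟨by simp; omega, ?_⟩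
    rw [List.drop_length_add_append]
    exact hi.2
  · intro a _ b _ hab
    exact Nat.add_left_cancel hab

lemma suffix_countOcc_eq_one {w : List α} (hw : w ≠ []) (h : lrs w = []) :
    ∀ s : List α, s ≠ [] → s <:+ w → countOcc s w = 1 := by
  set K := ((Finset.range (w.length + 1)).filter
      (fun k => 2 ≤ countOcc (w.drop (w.length - k)) w)).sup id with hK
  have hKle : K ≤ w.length := by
    apply Finset.sup_le
    intro k hk
    simp only [Finset.mem_filter, Finset.mem_range] at hk
    simpa [id] using Nat.lt_succ_iff.mp hk.1
  have hlen : 1 ≤ w.length := List.length_pos_iff.mpr hw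
  have hK0 : K = 0 := by
    have := List.drop_eq_nil_iff.mp h
    rw [← hK] at this
    omega
  intro s hs hsw
  refine le_antisymm ?_ (countOcc_pos_of_suffix hsw)
  by_contra hcon
  push_neg at hcon
  have hmem : s.length ∈ (Finset.range (w.length + 1)).filter
      (fun k => 2 ≤ countOcc (w.drop (w.length - k)) w) := by
    refine Finset.mem_filter.mpr ⟨Finset.mem_range.mpr ?_, ?_⟩
    · have := hsw.length_le; omega
    · rw [drop_of_suffix hsw]; omega
  have := Finset.le_sup (f := id) hmem
  rw [← hK, hK0] at this
  simp only [id] at this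
  exact hs (List.eq_nil_of_length_eq_zero (by omega))

lemma key (v : List α) (c : α)
    (h : ∀ s : List α, s ≠ [] → s <:+ (v ++ [c]) → countOcc s (v ++ [c]) = 1) :
    closedFactors (v ++ [c]) = insert [c] (closedFactors v) ∧ [c] ∉ closedFactors v := by
  have hcv : ¬ IsFactor [c] v := by
    rintro ⟨s, t, hv⟩
    have h1 : countOcc [c] (v ++ [c]) = 1 := h [c] (by simp) ⟨v, rfl⟩
    have hpair : ({s.length, v.length} : Finset ℕ) ⊆
        (Finset.range ((v ++ [c]).length + 1)).filter (fun i => [c] <+: (v ++ [c]).drop i) := by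
      intro i hi
      simp only [Finset.mem_insert, Finset.mem_singleton] at hi
      refine Finset.mem_filter.mpr ⟨Finset.mem_range.mpr ?_, ?_⟩
      · have : s.length ≤ v.length := by rw [hv]; simp; try omega
        rcases hi with rfl | rfl <;> simp <;> try omega
      · rcases hi with rfl | rfl
        · rw [hv, List.append_assoc, List.append_assoc, List.drop_left]
          try exact ⟨t ++ [c], by simp⟩
        · rw [List.drop_left]
          try exact List.prefix_rfl
    have hslen : s.length < v.length := by rw [hv]; simp; try omega
    have hcard : 2 ≤ countOcc [c] (v ++ [c]) := by
      rw [countOcc]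
      calc 2 = ({s.length, v.length} : Finset ℕ).card := by
              rw [Finset.card_insert_of_notMem (by simp; omega), Finset.card_singleton]
           _ ≤ _ := Finset.card_le_card hpair
    omega
  constructor
  · ext u
    simp only [closedFactors, Finset.mem_filter, Finset.mem_insert, mem_factors_iff]
    constructor
    · rintro ⟨⟨s, t, hw⟩, hclosed⟩
      by_cases huv : IsFactor u v
      · exact Or.inr ⟨huv, hclosed⟩
      left
      -- first show u is a suffix of v ++ [c]
      have husuf : u <:+ v ++ [c] := by
        rcases t.eq_nil_or_concat with rfl | ⟨t', x, rfl⟩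
        · exact ⟨s, by simpa using hw.symm⟩
        · exfalso
          apply huv
          have hw' : v ++ [c] = (s ++ u ++ t') ++ [x] := by
            rw [hw]; simp
          have := List.append_inj' hw' rfl
          exact ⟨s, t', this.1⟩
      -- u is nonempty
      have hune : u ≠ [] := by
        rcases hclosed with h1 | ⟨b, hbne, ⟨_, hbp, _⟩, _⟩
        · intro hu; rw [hu] at h1; simp at h1
        · intro hu; rw [hu] at hbp; exact hbne (List.prefix_nil.mp hbp)
      rcases hclosed with h1 | ⟨b, hbne, ⟨_, _, hbs⟩, hcnt⟩
      · -- length 1 suffix must be [c]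
        have := drop_of_suffix husuf
        rw [h1] at this
        simp only [List.length_append, List.length_singleton] at this
        rw [Nat.add_sub_cancel, List.drop_left] at this
        exact this.symm
      · exfalso
        have hb : countOcc b (v ++ [c]) = 1 := h b hbne (hbs.trans husuf)
        have := countOcc_le_of_suffix b husuf
        omega
    · rintro (rfl | ⟨⟨s, t, hv⟩, hclosed⟩)
      · exact ⟨⟨v, [], by simp⟩, Or.inl rfl⟩
      · exact ⟨⟨s, t ++ [c], by rw [hv]; simp⟩, hclosed⟩
  · intro hmem
    unfold closedFactors at hmem
    exact hcv (mem_factors_iff.mp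
      (@Finset.mem_of_mem_filter (List α) IsClosedStr (Classical.decPred _) (factors v) _ hmem))

theorem stmt3 (T : List α) (j : ℕ) (hj1 : 1 ≤ j) (hj2 : j ≤ T.length)
    (hlrs : lrs (T.take j) = []) :
    (closedFactors (T.take j)).card = (closedFactors (T.take (j - 1))).card + 1 := by
  have hjlt : j - 1 < T.length := by omega
  have hsplit : T.take j = T.take (j - 1) ++ [T.get ⟨j - 1, hjlt⟩] := by
    have : j = (j - 1) + 1 := by omega
    conv_lhs => rw [this]
    rw [List.take_succ, List.getElem?_eq_getElem hjlt]
    simp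
  set v := T.take (j - 1)
  set c := T.get ⟨j - 1, hjlt⟩
  rw [hsplit] at hlrs ⊢
  have hone := suffix_countOcc_eq_one (w := v ++ [c]) (by simp) hlrs
  obtain ⟨heq, hnot⟩ := key v c hone
  rw [heq, Finset.card_insert_of_notMem hnot]
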